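/- The sequence g_2(n) satisfies the linear recurrence g_2(n) = 5·g_2(n-1) − 5·g_2(n-2) for all n ≥ 4, with initial values g_2(2) = 3 and g_2(3) = 10. -/

import Mathlib

/-- `g t n` is the number of `n × n` matrices of nonnegative integers whose
`(i,j)` entry is `0` whenever `j ≥ i + 2` (`0`-based indices) and all of whose
row sums and column sums equal `t`. -/
noncomputable def g (t n : ℕ) : ℕ :=
  Set.ncard {M : Matrix (Fin n) (Fin n) ℕ |
    (∀ i j : Fin n, (i : ℕ) + 2 ≤ (j : ℕ) → M i j = 0) ∧
    (∀ i : Fin n, ∑ j, M i j = t) ∧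
    (∀ j : Fin n, ∑ i, M i j = t)}


namespace G2Rec


/-- column sum over the first `k` rows -/
def cs (k : ℕ) (f : ℕ → ℕ → ℕ) (j : ℕ) : ℕ := ∑ i ∈ Finset.range k, f i j

/-- partial matrices: `k` rows, `k+1` columns, staircase support, row sums 2,
column sums ≤ 2 -/
def T (k : ℕ) : Set (ℕ → ℕ → ℕ) :=
  {f | (∀ i j, k ≤ i ∨ i + 2 ≤ j → f i j = 0) ∧
       (∀ i, i < k → ∑ j ∈ Finset.range (k+1), f i j = 2) ∧
       (∀ j, j ≤ k → cs k f j ≤ 2)}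

def U (k : ℕ) : Set (ℕ → ℕ → ℕ) := {f | f ∈ T k ∧ ∀ j, j ≤ k → 1 ≤ cs k f j}

lemma entry_le (k : ℕ) (f : ℕ → ℕ → ℕ) (hf : f ∈ T k) (i j : ℕ) : f i j ≤ 2 := by
  obtain ⟨hs, hr, hc⟩ := hf
  by_cases hi : i < k
  · by_cases hj : j < k + 1
    · calc f i j ≤ ∑ j ∈ Finset.range (k+1), f i j :=
        Finset.single_le_sum (fun _ _ => Nat.zero_le _) (Finset.mem_range.mpr hj)
      _ = 2 := hr i hi
    · rw [hs i j (Or.inr (by omega))]; omega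
  · rw [hs i j (Or.inl (by omega))]; omega

lemma Tfin (k : ℕ) : (T k).Finite := by
  classical
  have : T k ⊆ (fun g : Fin k → Fin (k+1) → Fin 3 =>
      (fun i j => if h : i < k ∧ j < k + 1 then (g ⟨i, h.1⟩ ⟨j, h.2⟩ : ℕ) else 0)) ''
      Set.univ := by
    intro f hf
    refine ⟨fun i j => ⟨f i j, by have := entry_le k f hf i j; omega⟩, Set.mem_univ _, ?_⟩
    funext i j
    by_cases h : i < k ∧ j < k + 1
    · simp [h]
    · simp only [h, dif_neg, not_false_iff]
      exact (hf.1 i j (by omega)).symm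
  exact Set.Finite.subset (Set.Finite.image _ Set.finite_univ) this

lemma cs_total (k : ℕ) (f : ℕ → ℕ → ℕ) (hf : f ∈ T k) :
    ∑ j ∈ Finset.range (k+1), cs k f j = 2 * k := by
  unfold cs
  rw [Finset.sum_comm]
  rw [Finset.sum_congr rfl (fun i hi => hf.2.1 i (Finset.mem_range.mp hi))]
  simp [mul_comm]

/-- erase row `k` -/
def res (k : ℕ) (f : ℕ → ℕ → ℕ) : ℕ → ℕ → ℕ := fun i j => if i = k then 0 else f i j

lemma cs_res (k : ℕ) (f : ℕ → ℕ → ℕ) (j : ℕ) :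
    cs (k+1) f j = cs k (res k f) j + f k j := by
  unfold cs res
  rw [Finset.sum_range_succ]
  congr 1
  exact Finset.sum_congr rfl (fun i hi => by
    have := Finset.mem_range.mp hi
    simp [Nat.ne_of_lt this])

lemma res_mem (k : ℕ) (f : ℕ → ℕ → ℕ) (hf : f ∈ T (k+1)) : res k f ∈ T k := by
  obtain ⟨hs, hr, hc⟩ := hf
  refine ⟨?_, ?_, ?_⟩
  · intro i j h
    unfold res
    by_cases hi : i = k
    · simp [hi]
    · rw [if_neg hi]
      exact hs i j (by omega)
  · intro i hi
    have : ∑ j ∈ Finset.range (k+2), f i j = 2 := hr i (by omega)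
    rw [Finset.sum_range_succ, hs i (k+1) (Or.inr (by omega)), add_zero] at this
    rw [← this]
    exact Finset.sum_congr rfl (fun j hj => by unfold res; rw [if_neg (by omega)])
  · intro j hj
    have h1 := hc j (by omega)
    have := cs_res k f j
    omega


lemma dichotomy (s : Finset ℕ) (d : ℕ → ℕ) (h : ∑ j ∈ s, d j = 2) :
    (∃ j0 ∈ s, d j0 = 2 ∧ ∀ j ∈ s, j ≠ j0 → d j = 0) ∨
    (∃ j0, ∃ j1, j0 ∈ s ∧ j1 ∈ s ∧ j0 ≠ j1 ∧ d j0 = 1 ∧ d j1 = 1 ∧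
      ∀ j ∈ s, j ≠ j0 → j ≠ j1 → d j = 0) := by
  obtain ⟨j0, hj0, hd0⟩ := Finset.exists_ne_zero_of_sum_ne_zero (by omega : ∑ j ∈ s, d j ≠ 0)
  have he : d j0 + ∑ j ∈ s.erase j0, d j = 2 := by
    rw [Finset.add_sum_erase s d hj0, h]
  by_cases h2 : d j0 = 2
  · left
    refine ⟨j0, hj0, h2, fun j hj hne => ?_⟩
    have : ∑ j ∈ s.erase j0, d j = 0 := by omega
    exact (Finset.sum_eq_zero_iff.mp this) j (Finset.mem_erase.mpr ⟨hne, hj⟩)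
  · right
    have hd1 : d j0 = 1 := by omega
    have he1 : ∑ j ∈ s.erase j0, d j = 1 := by omega
    obtain ⟨j1, hj1, hdj1⟩ := Finset.exists_ne_zero_of_sum_ne_zero
      (by omega : ∑ j ∈ s.erase j0, d j ≠ 0)
    have he2 : d j1 + ∑ j ∈ (s.erase j0).erase j1, d j = 1 := by
      rw [Finset.add_sum_erase _ d hj1, he1]
    have hdj1' : d j1 = 1 := by omega
    refine ⟨j0, j1, hj0, (Finset.mem_erase.mp hj1).2, fun hEq => (Finset.mem_erase.mp hj1).1 hEq.symm,
      hd1, hdj1', fun j hj h0 h1 => ?_⟩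
    have : ∑ j ∈ (s.erase j0).erase j1, d j = 0 := by omega
    exact (Finset.sum_eq_zero_iff.mp this) j
      (Finset.mem_erase.mpr ⟨h1, Finset.mem_erase.mpr ⟨h0, hj⟩⟩)

def Phi (m : ℕ) (M : Matrix (Fin (m+1)) (Fin (m+1)) ℕ) : ℕ → ℕ → ℕ :=
  fun i j => if h : i < m ∧ j < m + 1 then M ⟨i, by omega⟩ ⟨j, h.2⟩ else 0

lemma fin_sum_split (m : ℕ) (v : Fin (m+1) → ℕ) (w : ℕ → ℕ)
    (hw : ∀ i : Fin (m+1), v i = w i) :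
    ∑ i, v i = (∑ i ∈ Finset.range m, w i) + w m := by
  have : ∑ i, v i = ∑ i : Fin (m+1), w i := Finset.sum_congr rfl (fun i _ => hw i)
  rw [this, Fin.sum_univ_eq_sum_range, Finset.sum_range_succ]

lemma g_eq_T (m : ℕ) : g 2 (m+1) = (T m).ncard := by
  classical
  set S : Set (Matrix (Fin (m+1)) (Fin (m+1)) ℕ) :=
    {M | (∀ i j : Fin (m+1), (i : ℕ) + 2 ≤ (j : ℕ) → M i j = 0) ∧
      (∀ i : Fin (m+1), ∑ j, M i j = 2) ∧
      (∀ j : Fin (m+1), ∑ i, M i j = 2)} with hS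
  have hmem : ∀ M ∈ S, Phi m M ∈ T m := by
    intro M hM
    obtain ⟨hz, hrow, hcol⟩ := hM
    refine ⟨?_, ?_, ?_⟩
    · intro i j h
      unfold Phi
      by_cases hij : i < m ∧ j < m + 1
      · rw [dif_pos hij]
        exact hz ⟨i, by omega⟩ ⟨j, hij.2⟩ (by simpa using h.resolve_left (by omega))
      · rw [dif_neg hij]
    · intro i hi
      have h2 := hrow ⟨i, by omega⟩
      rw [← Fin.sum_univ_eq_sum_range (fun j => Phi m M i j), ← h2]
      refine Finset.sum_congr rfl (fun j _ => ?_)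
      show Phi m M i (j : ℕ) = M ⟨i, by omega⟩ j
      unfold Phi
      rw [dif_pos ⟨hi, j.isLt⟩]
    · intro j hj
      have hsplit := fin_sum_split m (fun i => M i ⟨j, by omega⟩)
        (fun i => if h : i < m + 1 then M ⟨i, h⟩ ⟨j, by omega⟩ else 0)
        (fun i => by simp [i.isLt])
      rw [hcol ⟨j, by omega⟩] at hsplit
      beta_reduce at hsplit
      rw [dif_pos (by omega : m < m + 1)] at hsplit
      have hcs : cs m (Phi m M) j
          = ∑ i ∈ Finset.range m, if h : i < m + 1 then M ⟨i, h⟩ ⟨j, by omega⟩ else 0 := by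
        refine Finset.sum_congr rfl (fun i hi => ?_)
        have him := Finset.mem_range.mp hi
        show Phi m M i j = if h : i < m + 1 then M ⟨i, h⟩ ⟨j, by omega⟩ else 0
        unfold Phi
        rw [dif_pos (⟨him, by omega⟩ : i < m ∧ j < m + 1), dif_pos (by omega : i < m + 1)]
      omega
  have hinj : Set.InjOn (Phi m) S := by
    intro M hM M' hM' hEq
    obtain ⟨hz, hrow, hcol⟩ := hM
    obtain ⟨hz', hrow', hcol'⟩ := hM'
    ext i j
    by_cases hi : (i : ℕ) < m
    · have : Phi m M i j = Phi m M' i j := by rw [hEq]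
      unfold Phi at this
      rw [dif_pos ⟨hi, j.isLt⟩, dif_pos ⟨hi, j.isLt⟩] at this
      simpa using this
    · have hi' : (i : ℕ) = m := by omega
      have hsplit := fin_sum_split m (fun i' => M i' j)
        (fun i' => if h : i' < m + 1 then M ⟨i', h⟩ j else 0)
        (fun i' => by simp [i'.isLt])
      have hsplit' := fin_sum_split m (fun i' => M' i' j)
        (fun i' => if h : i' < m + 1 then M' ⟨i', h⟩ j else 0)
        (fun i' => by simp [i'.isLt])
      rw [hcol j] at hsplit
      rw [hcol' j] at hsplit'
      have hhead : ∑ i' ∈ Finset.range m, (fun i' => if h : i' < m + 1 then M ⟨i', h⟩ j else 0) i'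
          = ∑ i' ∈ Finset.range m, (fun i' => if h : i' < m + 1 then M' ⟨i', h⟩ j else 0) i' := by
        refine Finset.sum_congr rfl (fun i' hi'' => ?_)
        have him := Finset.mem_range.mp hi''
        have : Phi m M i' j = Phi m M' i' j := by rw [hEq]
        unfold Phi at this
        rw [dif_pos (⟨him, j.isLt⟩ : i' < m ∧ (j : ℕ) < m + 1),
          dif_pos (⟨him, j.isLt⟩ : i' < m ∧ (j : ℕ) < m + 1)] at this
        show (if h : i' < m + 1 then M ⟨i', h⟩ j else 0)
          = (if h : i' < m + 1 then M' ⟨i', h⟩ j else 0)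
        rw [dif_pos (by omega : i' < m + 1), dif_pos (by omega : i' < m + 1)]
        exact this
      beta_reduce at hsplit hsplit'
      beta_reduce at hhead
      rw [dif_pos (by omega : m < m + 1)] at hsplit hsplit'
      have : M ⟨m, by omega⟩ j = M' ⟨m, by omega⟩ j := by omega
      have hieq : i = ⟨m, by omega⟩ := Fin.ext hi'
      rw [hieq]; exact this
  have hsurj : ∀ f ∈ T m, ∃ M ∈ S, Phi m M = f := by
    intro f hf
    obtain ⟨hz, hrow, hcol⟩ := hf
    set M : Matrix (Fin (m+1)) (Fin (m+1)) ℕ :=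
      fun i j => if (i : ℕ) < m then f i j else 2 - cs m f j with hMdef
    have hMS : M ∈ S := by
      refine ⟨?_, ?_, ?_⟩
      · intro i j h
        show (if (i : ℕ) < m then f i j else 2 - cs m f j) = 0
        by_cases hi : (i : ℕ) < m
        · rw [if_pos hi]; exact hz i j (Or.inr h)
        · exfalso
          have := j.isLt
          omega
      · intro i
        by_cases hi : (i : ℕ) < m
        · have : ∑ j, M i j = ∑ j ∈ Finset.range (m+1), f i j := by
            rw [← Fin.sum_univ_eq_sum_range (fun j => f i j)]
            refine Finset.sum_congr rfl (fun j _ => ?_)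
            show (if (i : ℕ) < m then f i j else 2 - cs m f j) = f i j
            rw [if_pos hi]
          rw [this, hrow i hi]
        · have hstep : ∑ j, M i j = ∑ j ∈ Finset.range (m+1), (2 - cs m f j) := by
            rw [← Fin.sum_univ_eq_sum_range (fun j => 2 - cs m f j)]
            refine Finset.sum_congr rfl (fun j _ => ?_)
            show (if (i : ℕ) < m then f i j else 2 - cs m f j) = 2 - cs m f j
            rw [if_neg hi]
          have hb : ∑ j ∈ Finset.range (m+1), (2 - cs m f j) + ∑ j ∈ Finset.range (m+1), cs m f j
              = 2 * (m+1) := by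
            rw [← Finset.sum_add_distrib]
            rw [Finset.sum_congr rfl (fun j hj => by
              have hj' := Finset.mem_range.mp hj
              have := hcol j (by omega : j ≤ m)
              omega : ∀ j ∈ Finset.range (m+1), (2 - cs m f j) + cs m f j = 2)]
            simp [mul_comm]
          have ht := cs_total m f ⟨hz, hrow, hcol⟩
          rw [hstep]
          omega
      · intro j
        have hsplit := fin_sum_split m (fun i => M i j)
          (fun i => if i < m then f i j else 2 - cs m f j)
          (fun i => rfl)
        beta_reduce at hsplit
        have hhead : ∑ i ∈ Finset.range m, (if i < m then f i (j : ℕ) else 2 - cs m f j)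
            = cs m f j := by
          refine Finset.sum_congr rfl (fun i hi => ?_)
          rw [if_pos (Finset.mem_range.mp hi)]
        have hle := hcol j (by omega : (j : ℕ) ≤ m)
        rw [hsplit, hhead, if_neg (lt_irrefl m)]
        omega
    refine ⟨M, hMS, ?_⟩
    funext i j
    unfold Phi
    by_cases hij : i < m ∧ j < m + 1
    · rw [dif_pos hij]
      show (if i < m then f i j else 2 - cs m f j) = f i j
      rw [if_pos hij.1]
    · rw [dif_neg hij]
      by_cases hi : m ≤ i
      · exact (hz i j (Or.inl hi)).symm
      · exact (hz i j (Or.inr (by omega))).symm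
  have himg : Phi m '' S = T m := by
    apply Set.eq_of_subset_of_subset
    · rintro _ ⟨M, hM, rfl⟩; exact hmem M hM
    · intro f hf
      obtain ⟨M, hMS, hPhi⟩ := hsurj f hf
      exact ⟨M, hMS, hPhi⟩
  show S.ncard = (T m).ncard
  rw [← himg, Set.ncard_image_of_injOn hinj]




lemma sum_support_one (s : Finset ℕ) (r : ℕ → ℕ) (a : ℕ) (ha : a ∈ s)
    (h0 : ∀ j ∈ s, j ≠ a → r j = 0) : ∑ j ∈ s, r j = r a := by
  rw [← Finset.add_sum_erase s r ha]
  have : ∑ j ∈ s.erase a, r j = 0 :=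
    Finset.sum_eq_zero (fun j hj => h0 j (Finset.mem_erase.mp hj).2 (Finset.mem_erase.mp hj).1)
  omega

lemma sum_support_two (s : Finset ℕ) (r : ℕ → ℕ) (a b : ℕ) (ha : a ∈ s) (hb : b ∈ s)
    (hab : a ≠ b) (h0 : ∀ j ∈ s, j ≠ a → j ≠ b → r j = 0) : ∑ j ∈ s, r j = r a + r b := by
  rw [← Finset.add_sum_erase s r ha]
  have hb' : b ∈ s.erase a := Finset.mem_erase.mpr ⟨fun h => hab h.symm, hb⟩
  rw [← Finset.add_sum_erase _ r hb']
  have : ∑ j ∈ (s.erase a).erase b, r j = 0 :=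
    Finset.sum_eq_zero (fun j hj => by
      have h1 := Finset.mem_erase.mp hj
      have h2 := Finset.mem_erase.mp h1.2
      exact h0 j h2.2 h2.1 h1.1)
  omega

lemma sum_support_three (s : Finset ℕ) (r : ℕ → ℕ) (a b c : ℕ) (ha : a ∈ s) (hb : b ∈ s)
    (hc : c ∈ s) (hab : a ≠ b) (hac : a ≠ c) (hbc : b ≠ c)
    (h0 : ∀ j ∈ s, j ≠ a → j ≠ b → j ≠ c → r j = 0) :
    ∑ j ∈ s, r j = r a + r b + r c := by
  rw [← Finset.add_sum_erase s r ha]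
  have hb' : b ∈ s.erase a := Finset.mem_erase.mpr ⟨fun h => hab h.symm, hb⟩
  rw [← Finset.add_sum_erase _ r hb']
  have hc' : c ∈ (s.erase a).erase b :=
    Finset.mem_erase.mpr ⟨fun h => hbc h.symm, Finset.mem_erase.mpr ⟨fun h => hac h.symm, hc⟩⟩
  rw [← Finset.add_sum_erase _ r hc']
  have : ∑ j ∈ ((s.erase a).erase b).erase c, r j = 0 :=
    Finset.sum_eq_zero (fun j hj => by
      have h1 := Finset.mem_erase.mp hj
      have h2 := Finset.mem_erase.mp h1.2
      have h3 := Finset.mem_erase.mp h2.2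
      exact h0 j h3.2 h3.1 h2.1 h1.1)
  omega

def ext (k : ℕ) (M : ℕ → ℕ → ℕ) (r : ℕ → ℕ) : ℕ → ℕ → ℕ :=
  fun i j => if i = k then r j else M i j

lemma ext_row (k : ℕ) (M : ℕ → ℕ → ℕ) (r : ℕ → ℕ) (j : ℕ) : ext k M r k j = r j := if_pos rfl

lemma res_ext (k : ℕ) (M : ℕ → ℕ → ℕ) (r : ℕ → ℕ) (hM : M ∈ T k) :
    res k (ext k M r) = M := by
  funext i j
  unfold res ext
  by_cases hi : i = k
  · rw [if_pos hi, hi, (hM.1 k j (Or.inl le_rfl))]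
  · rw [if_neg hi, if_neg hi]

lemma cs_ext (k : ℕ) (M : ℕ → ℕ → ℕ) (r : ℕ → ℕ) (j : ℕ) :
    cs (k+1) (ext k M r) j = cs k M j + r j := by
  unfold cs
  rw [Finset.sum_range_succ, ext_row]
  congr 1
  exact Finset.sum_congr rfl (fun i hi => by
    have := Finset.mem_range.mp hi
    unfold ext
    rw [if_neg (by omega)])

lemma cs_out (k : ℕ) (M : ℕ → ℕ → ℕ) (hM : M ∈ T k) (j : ℕ) (hj : k + 1 ≤ j) :
    cs k M j = 0 :=
  Finset.sum_eq_zero (fun i hi => hM.1 i j (Or.inr (by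
    have := Finset.mem_range.mp hi; omega)))

lemma ext_mem_T (k : ℕ) (M : ℕ → ℕ → ℕ) (r : ℕ → ℕ) (hM : M ∈ T k)
    (hr0 : ∀ j, k + 2 ≤ j → r j = 0)
    (hrs : ∑ j ∈ Finset.range (k+2), r j = 2)
    (hrc : ∀ j, j ≤ k + 1 → cs k M j + r j ≤ 2) :
    ext k M r ∈ T (k+1) := by
  refine ⟨?_, ?_, ?_⟩
  · intro i j h
    unfold ext
    by_cases hi : i = k
    · rw [if_pos hi]
      exact hr0 j (by omega)
    · rw [if_neg hi]
      exact hM.1 i j (by omega)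
  · intro i hi
    by_cases hik : i = k
    · rw [← hrs]
      refine Finset.sum_congr rfl (fun j _ => ?_)
      unfold ext
      rw [if_pos hik]
    · have hik' : i < k := by omega
      have : ∑ j ∈ Finset.range (k+2), ext k M r i j
          = ∑ j ∈ Finset.range (k+2), M i j :=
        Finset.sum_congr rfl (fun j _ => by unfold ext; rw [if_neg hik])
      rw [this, Finset.sum_range_succ, hM.1 i (k+1) (Or.inr (by omega)), add_zero]
      exact hM.2.1 i hik'
  · intro j hj
    rw [cs_ext]
    exact hrc j hj

lemma ext_mem_U_iff (k : ℕ) (M : ℕ → ℕ → ℕ) (r : ℕ → ℕ)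
    (hT : ext k M r ∈ T (k+1)) :
    ext k M r ∈ U (k+1) ↔ ∀ j, j ≤ k + 1 → 1 ≤ cs k M j + r j := by
  constructor
  · intro h j hj
    have := h.2 j hj
    rw [cs_ext] at this
    exact this
  · intro h
    exact ⟨hT, fun j hj => by rw [cs_ext]; exact h j hj⟩



namespace Fib

def r1 (k j0 c : ℕ) : ℕ → ℕ := fun j => if j = j0 then c else if j = k+1 then 2 - c else 0

def r2 (k j0 j1 c0 c1 : ℕ) : ℕ → ℕ :=
  fun j => if j = j0 then c0 else if j = j1 then c1 else if j = k+1 then 2 - c0 - c1 else 0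

variable {k : ℕ} {M : ℕ → ℕ → ℕ}

section Case1
variable (hM : M ∈ T k) {j0 : ℕ} (hj0 : j0 ≤ k)
  (h0 : cs k M j0 = 0) (h2 : ∀ j, j ≤ k → j ≠ j0 → cs k M j = 2)

include hM hj0 h0 h2

lemma mem1 {c : ℕ} (hc : c ≤ 2) :
    ext k M (r1 k j0 c) ∈ T (k+1) ∧ res k (ext k M (r1 k j0 c)) = M := by
  refine ⟨ext_mem_T k M _ hM ?_ ?_ ?_, res_ext k M _ hM⟩
  · intro j hj
    unfold r1
    rw [if_neg (by omega), if_neg (by omega)]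
  · rw [sum_support_two (Finset.range (k+2)) _ j0 (k+1)
      (Finset.mem_range.mpr (by omega)) (Finset.mem_range.mpr (by omega)) (by omega)
      (fun j _ hja hjb => by unfold r1; rw [if_neg hja, if_neg hjb])]
    unfold r1
    rw [if_pos rfl, if_neg (by omega), if_pos rfl]
    omega
  · intro j hj
    unfold r1
    by_cases hja : j = j0
    · rw [if_pos hja, hja, h0]; omega
    · rw [if_neg hja]
      by_cases hjb : j = k+1
      · rw [if_pos hjb, hjb, cs_out k M hM (k+1) le_rfl]; omega
      · rw [if_neg hjb, h2 j (by omega) hja]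

lemma memU1 {c : ℕ} (hc : c ≤ 2) :
    ext k M (r1 k j0 c) ∈ U (k+1) ↔ c = 1 := by
  rw [ext_mem_U_iff k M _ (mem1 hM hj0 h0 h2 hc).1]
  constructor
  · intro h
    have ha := h j0 (by omega)
    have hb := h (k+1) (by omega)
    rw [h0] at ha
    rw [cs_out k M hM (k+1) le_rfl] at hb
    unfold r1 at ha hb
    rw [if_pos rfl] at ha
    rw [if_neg (by omega), if_pos rfl] at hb
    omega
  · intro hc1 j hj
    unfold r1
    by_cases hja : j = j0
    · rw [if_pos hja]; omega
    · rw [if_neg hja]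
      by_cases hjb : j = k+1
      · rw [if_pos hjb, hjb, cs_out k M hM (k+1) le_rfl]; omega
      · rw [if_neg hjb, h2 j (by omega) hja]; omega

lemma fiber1 :
    {f | f ∈ T (k+1) ∧ res k f = M} =
      {ext k M (r1 k j0 0), ext k M (r1 k j0 1), ext k M (r1 k j0 2)} := by
  apply Set.eq_of_subset_of_subset
  · rintro f ⟨hfT, hres⟩
    have hc : f k j0 ≤ 2 := entry_le (k+1) f hfT k j0
    have hrow0 : ∀ j, j ≤ k → j ≠ j0 → f k j = 0 := by
      intro j hj hja
      have hcs := hfT.2.2 j (by omega)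
      have := cs_res k f j
      rw [hres, h2 j hj hja] at this
      omega
    have hkey : f = ext k M (r1 k j0 (f k j0)) := by
      funext i j
      by_cases hi : i = k
      · rw [hi]
        unfold ext
        rw [if_pos rfl]
        unfold r1
        by_cases hja : j = j0
        · rw [if_pos hja, hja]
        · rw [if_neg hja]
          by_cases hjb : j = k+1
          · rw [if_pos hjb, hjb]
            have hsum := hfT.2.1 k (by omega)
            rw [sum_support_two (Finset.range (k+2)) _ j0 (k+1)
              (Finset.mem_range.mpr (by omega)) (Finset.mem_range.mpr (by omega)) (by omega)
              (fun j hjm hja hjb => by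
                have := Finset.mem_range.mp hjm
                exact hrow0 j (by omega) hja)] at hsum
            omega
          · rw [if_neg hjb]
            by_cases hjc : j ≤ k
            · exact hrow0 j hjc hja
            · exact hfT.1 k j (Or.inr (by omega))
      · unfold ext
        rw [if_neg hi]
        rw [← hres]
        unfold res
        rw [if_neg hi]
    have hc3 : f k j0 = 0 ∨ f k j0 = 1 ∨ f k j0 = 2 := by omega
    rcases hc3 with h | h | h <;> rw [h] at hkey
    · rw [hkey]; left; rfl
    · rw [hkey]; right; left; rfl
    · rw [hkey]; right; right; rfl
  · intro f hf
    rcases hf with h | h | h <;> rw [h]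
    · exact mem1 hM hj0 h0 h2 (by omega)
    · exact mem1 hM hj0 h0 h2 (by omega)
    · exact mem1 hM hj0 h0 h2 (by omega)

end Case1

section Case2
variable (hM : M ∈ T k) {j0 j1 : ℕ} (hj0 : j0 ≤ k) (hj1 : j1 ≤ k) (hne : j0 ≠ j1)
  (h0 : cs k M j0 = 1) (h1 : cs k M j1 = 1)
  (h2 : ∀ j, j ≤ k → j ≠ j0 → j ≠ j1 → cs k M j = 2)

include hM hj0 hj1 hne h0 h1 h2

lemma mem2 {c0 c1 : ℕ} (hc0 : c0 ≤ 1) (hc1 : c1 ≤ 1) :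
    ext k M (r2 k j0 j1 c0 c1) ∈ T (k+1) ∧ res k (ext k M (r2 k j0 j1 c0 c1)) = M := by
  refine ⟨ext_mem_T k M _ hM ?_ ?_ ?_, res_ext k M _ hM⟩
  · intro j hj
    unfold r2
    rw [if_neg (by omega), if_neg (by omega), if_neg (by omega)]
  · rw [sum_support_three (Finset.range (k+2)) _ j0 j1 (k+1)
      (Finset.mem_range.mpr (by omega)) (Finset.mem_range.mpr (by omega))
      (Finset.mem_range.mpr (by omega)) hne (by omega) (by omega)
      (fun j _ hja hjb hjc => by unfold r2; rw [if_neg hja, if_neg hjb, if_neg hjc])]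
    unfold r2
    rw [if_pos rfl, if_neg (Ne.symm hne), if_pos rfl,
      if_neg (by omega), if_neg (by omega), if_pos rfl]
    omega
  · intro j hj
    unfold r2
    by_cases hja : j = j0
    · rw [if_pos hja, hja, h0]; omega
    · rw [if_neg hja]
      by_cases hjb : j = j1
      · rw [if_pos hjb, hjb, h1]; omega
      · rw [if_neg hjb]
        by_cases hjc : j = k+1
        · rw [if_pos hjc, hjc, cs_out k M hM (k+1) le_rfl]; omega
        · rw [if_neg hjc, h2 j (by omega) hja hjb]

lemma memU2 {c0 c1 : ℕ} (hc0 : c0 ≤ 1) (hc1 : c1 ≤ 1) :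
    ext k M (r2 k j0 j1 c0 c1) ∈ U (k+1) ↔ c0 + c1 ≤ 1 := by
  rw [ext_mem_U_iff k M _ (mem2 hM hj0 hj1 hne h0 h1 h2 hc0 hc1).1]
  constructor
  · intro h
    have hb := h (k+1) (by omega)
    rw [cs_out k M hM (k+1) le_rfl] at hb
    unfold r2 at hb
    rw [if_neg (by omega), if_neg (by omega), if_pos rfl] at hb
    omega
  · intro hs j hj
    unfold r2
    by_cases hja : j = j0
    · rw [if_pos hja, hja, h0]; omega
    · rw [if_neg hja]
      by_cases hjb : j = j1
      · rw [if_pos hjb, hjb, h1]; omega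
      · rw [if_neg hjb]
        by_cases hjc : j = k+1
        · rw [if_pos hjc, hjc, cs_out k M hM (k+1) le_rfl]; omega
        · rw [if_neg hjc, h2 j (by omega) hja hjb]; omega

lemma fiber2 :
    {f | f ∈ T (k+1) ∧ res k f = M} =
      {ext k M (r2 k j0 j1 0 0), ext k M (r2 k j0 j1 1 0),
       ext k M (r2 k j0 j1 0 1), ext k M (r2 k j0 j1 1 1)} := by
  apply Set.eq_of_subset_of_subset
  · rintro f ⟨hfT, hres⟩
    have hcs0 : f k j0 ≤ 1 := by
      have hcs := hfT.2.2 j0 (by omega)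
      have := cs_res k f j0
      rw [hres, h0] at this
      omega
    have hcs1 : f k j1 ≤ 1 := by
      have hcs := hfT.2.2 j1 (by omega)
      have := cs_res k f j1
      rw [hres, h1] at this
      omega
    have hrow0 : ∀ j, j ≤ k → j ≠ j0 → j ≠ j1 → f k j = 0 := by
      intro j hj hja hjb
      have hcs := hfT.2.2 j (by omega)
      have := cs_res k f j
      rw [hres, h2 j hj hja hjb] at this
      omega
    have hkey : f = ext k M (r2 k j0 j1 (f k j0) (f k j1)) := by
      funext i j
      by_cases hi : i = k
      · rw [hi]
        unfold ext
        rw [if_pos rfl]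
        unfold r2
        by_cases hja : j = j0
        · rw [if_pos hja, hja]
        · rw [if_neg hja]
          by_cases hjb : j = j1
          · rw [if_pos hjb, hjb]
          · rw [if_neg hjb]
            by_cases hjc : j = k+1
            · rw [if_pos hjc, hjc]
              have hsum := hfT.2.1 k (by omega)
              rw [sum_support_three (Finset.range (k+2)) _ j0 j1 (k+1)
                (Finset.mem_range.mpr (by omega)) (Finset.mem_range.mpr (by omega))
                (Finset.mem_range.mpr (by omega)) hne (by omega) (by omega)
                (fun j hjm hja hjb hjc => by
                  have := Finset.mem_range.mp hjm
                  exact hrow0 j (by omega) hja hjb)] at hsum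
              omega
            · rw [if_neg hjc]
              by_cases hjd : j ≤ k
              · exact hrow0 j hjd hja hjb
              · exact hfT.1 k j (Or.inr (by omega))
      · unfold ext
        rw [if_neg hi]
        rw [← hres]
        unfold res
        rw [if_neg hi]
    have hc4 : f k j0 = 0 ∧ f k j1 = 0 ∨ f k j0 = 1 ∧ f k j1 = 0 ∨
        f k j0 = 0 ∧ f k j1 = 1 ∨ f k j0 = 1 ∧ f k j1 = 1 := by omega
    rcases hc4 with ⟨ha, hb⟩ | ⟨ha, hb⟩ | ⟨ha, hb⟩ | ⟨ha, hb⟩ <;> rw [ha, hb] at hkey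
    · rw [hkey]; left; rfl
    · rw [hkey]; right; left; rfl
    · rw [hkey]; right; right; left; rfl
    · rw [hkey]; right; right; right; rfl
  · intro f hf
    rcases hf with h | h | h | h <;> rw [h]
    · exact mem2 hM hj0 hj1 hne h0 h1 h2 (by omega) (by omega)
    · exact mem2 hM hj0 hj1 hne h0 h1 h2 (by omega) (by omega)
    · exact mem2 hM hj0 hj1 hne h0 h1 h2 (by omega) (by omega)
    · exact mem2 hM hj0 hj1 hne h0 h1 h2 (by omega) (by omega)

end Case2

end Fib



lemma demand_total (k : ℕ) (M : ℕ → ℕ → ℕ) (hM : M ∈ T k) :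
    ∑ j ∈ Finset.range (k+1), (2 - cs k M j) = 2 := by
  have h1 : ∑ j ∈ Finset.range (k+1), (2 - cs k M j) + ∑ j ∈ Finset.range (k+1), cs k M j
      = 2 * (k+1) := by
    rw [← Finset.sum_add_distrib]
    rw [Finset.sum_congr rfl (fun j hj => by
      have hj' := Finset.mem_range.mp hj
      have := hM.2.2 j (by omega)
      omega : ∀ j ∈ Finset.range (k+1), (2 - cs k M j) + cs k M j = 2)]
    simp [mul_comm]
  have h2 := cs_total k M hM
  omega

lemma ext_eval (k : ℕ) (M : ℕ → ℕ → ℕ) (r : ℕ → ℕ) (j : ℕ) : ext k M r k j = r j :=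
  ext_row k M r j

open scoped Classical in
lemma fiber_card (k : ℕ) (M : ℕ → ℕ → ℕ) (hM : M ∈ T k) :
    {f | f ∈ T (k+1) ∧ res k f = M}.ncard = (if M ∈ U k then 4 else 3) ∧
    {f | f ∈ U (k+1) ∧ res k f = M}.ncard = (if M ∈ U k then 3 else 1) := by
  rcases dichotomy (Finset.range (k+1)) (fun j => 2 - cs k M j) (demand_total k M hM) with
    ⟨j0, hj0m, hd2, hdrest⟩ | ⟨j0, j1, hj0m, hj1m, hne, hd0, hd1, hdrest⟩
  · -- case 1 : one column with demand 2
    have hj0 : j0 ≤ k := by have := Finset.mem_range.mp hj0m; omega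
    have h0 : cs k M j0 = 0 := by have := hM.2.2 j0 hj0; omega
    have h2 : ∀ j, j ≤ k → j ≠ j0 → cs k M j = 2 := by
      intro j hj hja
      have := hdrest j (Finset.mem_range.mpr (by omega)) hja
      have := hM.2.2 j hj
      omega
    have hMU : M ∉ U k := fun h => by have := h.2 j0 hj0; omega
    rw [if_neg hMU, if_neg hMU]
    have hev : ∀ c, ext k M (Fib.r1 k j0 c) k j0 = c := by
      intro c
      rw [ext_eval]
      unfold Fib.r1
      rw [if_pos rfl]
    have keyr : ∀ a b : ℕ, a ≠ b → ext k M (Fib.r1 k j0 a) ≠ ext k M (Fib.r1 k j0 b) := by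
      intro a b hab h
      have := congrFun (congrFun h k) j0
      rw [hev, hev] at this
      exact hab this
    constructor
    · rw [Fib.fiber1 hM hj0 h0 h2]
      rw [Set.ncard_insert_of_notMem (by
          simp only [Set.mem_insert_iff, Set.mem_singleton_iff]
          push_neg
          exact ⟨keyr 0 1 (by omega), keyr 0 2 (by omega)⟩),
        Set.ncard_pair (keyr 1 2 (by omega))]
    · have hUeq : {f | f ∈ U (k+1) ∧ res k f = M} = {ext k M (Fib.r1 k j0 1)} := by
        apply Set.eq_of_subset_of_subset
        · rintro f ⟨hfU, hres⟩
          have hfT : f ∈ {f | f ∈ T (k+1) ∧ res k f = M} := ⟨hfU.1, hres⟩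
          rw [Fib.fiber1 hM hj0 h0 h2] at hfT
          rcases hfT with h | h | h <;> rw [h] at hfU ⊢
          · exact absurd ((Fib.memU1 hM hj0 h0 h2 (by omega)).mp hfU) (by omega)
          · rfl
          · exact absurd ((Fib.memU1 hM hj0 h0 h2 (by omega)).mp hfU) (by omega)
        · rintro f rfl
          exact ⟨(Fib.memU1 hM hj0 h0 h2 (by omega)).mpr rfl,
            (Fib.mem1 hM hj0 h0 h2 (by omega)).2⟩
      rw [hUeq, Set.ncard_singleton]
  · -- case 2 : two columns with demand 1
    have hj0 : j0 ≤ k := by have := Finset.mem_range.mp hj0m; omega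
    have hj1 : j1 ≤ k := by have := Finset.mem_range.mp hj1m; omega
    have h0 : cs k M j0 = 1 := by have := hM.2.2 j0 hj0; omega
    have h1 : cs k M j1 = 1 := by have := hM.2.2 j1 hj1; omega
    have h2 : ∀ j, j ≤ k → j ≠ j0 → j ≠ j1 → cs k M j = 2 := by
      intro j hj hja hjb
      have := hdrest j (Finset.mem_range.mpr (by omega)) hja hjb
      have := hM.2.2 j hj
      omega
    have hMU : M ∈ U k := by
      refine ⟨hM, fun j hj => ?_⟩
      by_cases hja : j = j0
      · rw [hja, h0]
      · by_cases hjb : j = j1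
        · rw [hjb, h1]
        · rw [h2 j hj hja hjb]; omega
    rw [if_pos hMU, if_pos hMU]
    have hev0 : ∀ c0 c1, ext k M (Fib.r2 k j0 j1 c0 c1) k j0 = c0 := by
      intro c0 c1
      rw [ext_eval]
      unfold Fib.r2
      rw [if_pos rfl]
    have hev1 : ∀ c0 c1, ext k M (Fib.r2 k j0 j1 c0 c1) k j1 = c1 := by
      intro c0 c1
      rw [ext_eval]
      unfold Fib.r2
      rw [if_neg (Ne.symm hne), if_pos rfl]
    have key : ∀ a0 a1 b0 b1 : ℕ, a0 ≠ b0 ∨ a1 ≠ b1 →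
        ext k M (Fib.r2 k j0 j1 a0 a1) ≠ ext k M (Fib.r2 k j0 j1 b0 b1) := by
      intro a0 a1 b0 b1 hd h
      have h0' := congrFun (congrFun h k) j0
      have h1' := congrFun (congrFun h k) j1
      rw [hev0, hev0] at h0'
      rw [hev1, hev1] at h1'
      rcases hd with hd | hd <;> exact hd (by omega)
    constructor
    · rw [Fib.fiber2 hM hj0 hj1 hne h0 h1 h2]
      rw [Set.ncard_insert_of_notMem (by
          simp only [Set.mem_insert_iff, Set.mem_singleton_iff]
          push_neg
          exact ⟨key 0 0 1 0 (by omega), key 0 0 0 1 (by omega), key 0 0 1 1 (by omega)⟩),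
        Set.ncard_insert_of_notMem (by
          simp only [Set.mem_insert_iff, Set.mem_singleton_iff]
          push_neg
          exact ⟨key 1 0 0 1 (by omega), key 1 0 1 1 (by omega)⟩),
        Set.ncard_pair (key 0 1 1 1 (by omega))]
    · have hUeq : {f | f ∈ U (k+1) ∧ res k f = M} =
          {ext k M (Fib.r2 k j0 j1 0 0), ext k M (Fib.r2 k j0 j1 1 0),
           ext k M (Fib.r2 k j0 j1 0 1)} := by
        apply Set.eq_of_subset_of_subset
        · rintro f ⟨hfU, hres⟩
          have hfT : f ∈ {f | f ∈ T (k+1) ∧ res k f = M} := ⟨hfU.1, hres⟩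
          rw [Fib.fiber2 hM hj0 hj1 hne h0 h1 h2] at hfT
          rcases hfT with h | h | h | h <;> rw [h] at hfU ⊢
          · left; rfl
          · right; left; rfl
          · right; right; rfl
          · exact absurd ((Fib.memU2 hM hj0 hj1 hne h0 h1 h2 (by omega) (by omega)).mp hfU)
              (by omega)
        · intro f hf
          rcases hf with h | h | h <;> rw [h]
          · exact ⟨(Fib.memU2 hM hj0 hj1 hne h0 h1 h2 (by omega) (by omega)).mpr (by omega),
              (Fib.mem2 hM hj0 hj1 hne h0 h1 h2 (by omega) (by omega)).2⟩
          · exact ⟨(Fib.memU2 hM hj0 hj1 hne h0 h1 h2 (by omega) (by omega)).mpr (by omega),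
              (Fib.mem2 hM hj0 hj1 hne h0 h1 h2 (by omega) (by omega)).2⟩
          · exact ⟨(Fib.memU2 hM hj0 hj1 hne h0 h1 h2 (by omega) (by omega)).mpr (by omega),
              (Fib.mem2 hM hj0 hj1 hne h0 h1 h2 (by omega) (by omega)).2⟩
      rw [hUeq]
      rw [Set.ncard_insert_of_notMem (by
          simp only [Set.mem_insert_iff, Set.mem_singleton_iff]
          push_neg
          exact ⟨key 0 0 1 0 (by omega), key 0 0 0 1 (by omega)⟩),
        Set.ncard_pair (key 1 0 0 1 (by omega))]




lemma Ufin (k : ℕ) : (U k).Finite := (Tfin k).subset (fun f hf => hf.1)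

lemma rec_step (k : ℕ) :
    (T (k+1)).ncard = 3 * (T k).ncard + (U k).ncard ∧
    (U (k+1)).ncard = (T k).ncard + 2 * (U k).ncard := by
  classical
  have hBcoe : ((Tfin k).toFinset : Set (ℕ → ℕ → ℕ)) = T k := Set.Finite.coe_toFinset _
  have hUcard : ((Tfin k).toFinset.filter (fun M => M ∈ U k)).card = (U k).ncard := by
    rw [← Set.ncard_coe_finset]
    congr 1
    ext f
    simp only [Finset.coe_filter, Set.Finite.mem_toFinset, Set.mem_setOf_eq]
    exact ⟨fun h => h.2, fun h => ⟨h.1, h⟩⟩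
  have hTcard : (Tfin k).toFinset.card = (T k).ncard := by
    rw [← Set.ncard_coe_finset, hBcoe]
  have hcardsplit := Finset.card_filter_add_card_filter_not
    (s := (Tfin k).toFinset) (p := fun M => M ∈ U k)
  constructor
  · have hmaps : ∀ f ∈ (Tfin (k+1)).toFinset, res k f ∈ (Tfin k).toFinset := by
      intro f hf
      rw [Set.Finite.mem_toFinset] at hf ⊢
      exact res_mem k f hf
    have hsum := Finset.card_eq_sum_card_fiberwise hmaps
    have hfib : ∀ M ∈ (Tfin k).toFinset,
        ((Tfin (k+1)).toFinset.filter (fun f => res k f = M)).card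
          = if M ∈ U k then 4 else 3 := by
      intro M hM
      rw [Set.Finite.mem_toFinset] at hM
      have hset : (((Tfin (k+1)).toFinset.filter (fun f => res k f = M)) : Set (ℕ → ℕ → ℕ))
          = {f | f ∈ T (k+1) ∧ res k f = M} := by
        ext f
        simp [Set.Finite.mem_toFinset]
      rw [← Set.ncard_coe_finset, hset]
      exact (fiber_card k M hM).1
    rw [Finset.sum_congr rfl hfib, Finset.sum_ite, Finset.sum_const, Finset.sum_const,
      smul_eq_mul, smul_eq_mul] at hsum
    have hA : (Tfin (k+1)).toFinset.card = (T (k+1)).ncard := by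
      rw [← Set.ncard_coe_finset, Set.Finite.coe_toFinset]
    omega
  · have hmaps : ∀ f ∈ (Ufin (k+1)).toFinset, res k f ∈ (Tfin k).toFinset := by
      intro f hf
      rw [Set.Finite.mem_toFinset] at hf ⊢
      exact res_mem k f hf.1
    have hsum := Finset.card_eq_sum_card_fiberwise hmaps
    have hfib : ∀ M ∈ (Tfin k).toFinset,
        ((Ufin (k+1)).toFinset.filter (fun f => res k f = M)).card
          = if M ∈ U k then 3 else 1 := by
      intro M hM
      rw [Set.Finite.mem_toFinset] at hM
      have hset : (((Ufin (k+1)).toFinset.filter (fun f => res k f = M)) : Set (ℕ → ℕ → ℕ))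
          = {f | f ∈ U (k+1) ∧ res k f = M} := by
        ext f
        simp [Set.Finite.mem_toFinset]
      rw [← Set.ncard_coe_finset, hset]
      exact (fiber_card k M hM).2
    rw [Finset.sum_congr rfl hfib, Finset.sum_ite, Finset.sum_const, Finset.sum_const,
      smul_eq_mul, smul_eq_mul] at hsum
    have hA : (Ufin (k+1)).toFinset.card = (U (k+1)).ncard := by
      rw [← Set.ncard_coe_finset, Set.Finite.coe_toFinset]
    omega

lemma T0 : (T 0).ncard = 1 := by
  have : T 0 = {fun _ _ => 0} := by
    apply Set.eq_of_subset_of_subset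
    · intro f hf
      have : f = fun _ _ => 0 := funext fun i => funext fun j =>
        hf.1 i j (Or.inl (Nat.zero_le i))
      exact this
    · rintro f rfl
      refine ⟨fun i j _ => rfl, fun i hi => absurd hi (by omega), fun j _ => ?_⟩
      unfold cs
      simp
  rw [this, Set.ncard_singleton]

lemma U0 : (U 0).ncard = 0 := by
  have : U 0 = ∅ := by
    apply Set.eq_empty_of_forall_notMem
    intro f hf
    have := hf.2 0 le_rfl
    unfold cs at this
    simp at this
  rw [this, Set.ncard_empty]

end G2Rec


/-- The sequence `g 2 n` satisfies the linear recurrence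
`g 2 n = 5 * g 2 (n-1) - 5 * g 2 (n-2)` for all `n ≥ 4`, with initial values
`g 2 2 = 3` and `g 2 3 = 10`. -/
theorem g_two_recurrence :
    (∀ n : ℕ, 4 ≤ n →
      (g 2 n : ℤ) = 5 * (g 2 (n - 1) : ℤ) - 5 * (g 2 (n - 2) : ℤ)) ∧
    g 2 2 = 3 ∧ g 2 3 = 10 := by
  have t0 := G2Rec.T0
  have u0 := G2Rec.U0
  refine ⟨?_, ?_, ?_⟩
  · intro n hn
    obtain ⟨k, rfl⟩ : ∃ k, n = k + 4 := ⟨n - 4, by omega⟩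
    have h3 : g 2 (k+4) = (G2Rec.T (k+3)).ncard := G2Rec.g_eq_T (k+3)
    have h2 : g 2 (k+4-1) = (G2Rec.T (k+2)).ncard := G2Rec.g_eq_T (k+2)
    have h1 : g 2 (k+4-2) = (G2Rec.T (k+1)).ncard := G2Rec.g_eq_T (k+1)
    have ra : (G2Rec.T (k+2)).ncard
        = 3 * (G2Rec.T (k+1)).ncard + (G2Rec.U (k+1)).ncard := (G2Rec.rec_step (k+1)).1
    have rb : (G2Rec.T (k+3)).ncard
        = 3 * (G2Rec.T (k+2)).ncard + (G2Rec.U (k+2)).ncard := (G2Rec.rec_step (k+2)).1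
    have rc : (G2Rec.U (k+2)).ncard
        = (G2Rec.T (k+1)).ncard + 2 * (G2Rec.U (k+1)).ncard := (G2Rec.rec_step (k+1)).2
    rw [h3, h2, h1]
    omega
  · have h : g 2 2 = (G2Rec.T 1).ncard := G2Rec.g_eq_T 1
    have ra : (G2Rec.T 1).ncard
        = 3 * (G2Rec.T 0).ncard + (G2Rec.U 0).ncard := (G2Rec.rec_step 0).1
    omega
  · have h : g 2 3 = (G2Rec.T 2).ncard := G2Rec.g_eq_T 2
    have ra : (G2Rec.T 1).ncard
        = 3 * (G2Rec.T 0).ncard + (G2Rec.U 0).ncard := (G2Rec.rec_step 0).1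
    have rb : (G2Rec.T 2).ncard
        = 3 * (G2Rec.T 1).ncard + (G2Rec.U 1).ncard := (G2Rec.rec_step 1).1
    have rc : (G2Rec.U 1).ncard
        = (G2Rec.T 0).ncard + 2 * (G2Rec.U 0).ncard := (G2Rec.rec_step 0).2
    omega
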